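/- For every d ∈ {1,2,3} there exists a constant C > 0 such that for all κ > 0, all x, y ∈ ℝ^d and all t > 0, the Laplacian in x of the d-dimensional Mehler kernel satisfies |Δ_x G_κ^{(d)}(x,y;t,1)| ≤ C · κ · coth(κt) · G_κ^{(d)}(x,y;t,2). -/

import Mathlib

open Real

/-- The generalized d-dimensional Mehler kernel `G_κ^{(d)}(x,y;t,γ)`.
Here `cosh/sinh` plays the role of `coth`. -/
noncomputable def mehlerG (d : ℕ) (κ t γ : ℝ) (x y : Fin d → ℝ) : ℝ :=
  (κ / (2 * Real.pi * Real.sinh (κ * t))) ^ ((d : ℝ) / 2) *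
    ∏ j, Real.exp (-(κ / (4 * γ)) * ((x j + y j) ^ 2 * Real.tanh (κ * t / 2) +
      (x j - y j) ^ 2 * (Real.cosh (κ * t / 2) / Real.sinh (κ * t / 2))))

/-- The Laplacian of `f : ℝ^d → ℝ` at `x`: the sum of the second partial derivatives
along the coordinate directions. -/
noncomputable def laplacian {d : ℕ} (f : (Fin d → ℝ) → ℝ) (x : Fin d → ℝ) : ℝ :=
  ∑ j, iteratedDeriv 2 (fun s => f (Function.update x j s)) (x j)


private lemma hasDerivAt_quadExp (C a2 a1 a0 x : ℝ) :
    HasDerivAt (fun s => C * Real.exp (a2 * s ^ 2 + a1 * s + a0))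
      (C * Real.exp (a2 * x ^ 2 + a1 * x + a0) * (2 * a2 * x + a1)) x := by
  have hq0 := (((hasDerivAt_pow 2 x).const_mul a2).add
    (((hasDerivAt_id x).const_mul a1).add_const a0))
  have hq : HasDerivAt (fun s : ℝ => a2 * s ^ 2 + a1 * s + a0) (2 * a2 * x + a1) x := by
    have heq : (fun s : ℝ => a2 * s ^ 2 + a1 * s + a0)
        = fun s : ℝ => a2 * s ^ 2 + (a1 * id s + a0) := by funext s; simp; ring
    rw [heq]
    refine hq0.congr_deriv ?_
    push_cast
    ring
  have := (hq.exp).const_mul C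
  refine this.congr_deriv ?_
  ring

private lemma iteratedDeriv_two_quadExp (C a2 a1 a0 x : ℝ) :
    iteratedDeriv 2 (fun s => C * Real.exp (a2 * s ^ 2 + a1 * s + a0)) x =
      C * Real.exp (a2 * x ^ 2 + a1 * x + a0) * ((2 * a2 * x + a1) ^ 2 + 2 * a2) := by
  have hd1 : deriv (fun s => C * Real.exp (a2 * s ^ 2 + a1 * s + a0)) =
      fun s => C * Real.exp (a2 * s ^ 2 + a1 * s + a0) * (2 * a2 * s + a1) :=
    funext fun s => (hasDerivAt_quadExp C a2 a1 a0 s).deriv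
  have h2 : HasDerivAt (fun s => C * Real.exp (a2 * s ^ 2 + a1 * s + a0) * (2 * a2 * s + a1))
      (C * Real.exp (a2 * x ^ 2 + a1 * x + a0) * ((2 * a2 * x + a1) ^ 2 + 2 * a2)) x := by
    have hlin : HasDerivAt (fun s : ℝ => 2 * a2 * s + a1) (2 * a2) x := by
      simpa using ((hasDerivAt_id x).const_mul (2 * a2)).add_const a1
    have := (hasDerivAt_quadExp C a2 a1 a0 x).mul hlin
    refine this.congr_deriv ?_
    ring
  rw [show (2:ℕ) = 1 + 1 from rfl, iteratedDeriv_succ, iteratedDeriv_one, hd1]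
  exact h2.deriv

private lemma laplacian_mehler (d : ℕ) (κ t : ℝ) (x y : Fin d → ℝ) :
    laplacian (fun x' => mehlerG d κ t 1 x' y) x =
      mehlerG d κ t 1 x y * ∑ j,
        ((κ / 2 * ((x j + y j) * Real.tanh (κ * t / 2) +
            (x j - y j) * (Real.cosh (κ * t / 2) / Real.sinh (κ * t / 2)))) ^ 2
          - κ / 2 * (Real.tanh (κ * t / 2) + Real.cosh (κ * t / 2) / Real.sinh (κ * t / 2))) := by
  set a := Real.tanh (κ * t / 2) with ha
  set b := Real.cosh (κ * t / 2) / Real.sinh (κ * t / 2) with hb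
  set pref := (κ / (2 * Real.pi * Real.sinh (κ * t))) ^ ((d : ℝ) / 2) with hpref
  have key : ∀ j : Fin d,
      iteratedDeriv 2 (fun s => mehlerG d κ t 1 (Function.update x j s) y) (x j) =
        mehlerG d κ t 1 x y *
          ((κ / 2 * ((x j + y j) * a + (x j - y j) * b)) ^ 2 - κ / 2 * (a + b)) := by
    intro j
    set A2 := -(κ / 4) * (a + b) with hA2
    set A1 := -(κ / 2) * (y j) * (a - b) with hA1
    set A0 := -(κ / 4) * (y j) ^ 2 * (a + b) with hA0
    set Cj := pref * ∏ k ∈ Finset.univ.erase j,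
        Real.exp (-(κ / (4 * 1)) * ((x k + y k) ^ 2 * a + (x k - y k) ^ 2 * b)) with hCj
    have hfun : (fun s => mehlerG d κ t 1 (Function.update x j s) y) =
        fun s => Cj * Real.exp (A2 * s ^ 2 + A1 * s + A0) := by
      funext s
      simp only [mehlerG, ← ha, ← hb, ← hpref]
      rw [← Finset.mul_prod_erase Finset.univ _ (Finset.mem_univ j)]
      rw [Finset.prod_congr rfl (fun k hk => by
        rw [Function.update_of_ne (Finset.ne_of_mem_erase hk)])]
      rw [Function.update_self]
      rw [show -(κ / (4 * 1)) * ((s + y j) ^ 2 * a + (s - y j) ^ 2 * b)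
          = A2 * s ^ 2 + A1 * s + A0 by rw [hA2, hA1, hA0]; ring]
      rw [hCj]; ring
    rw [hfun, iteratedDeriv_two_quadExp]
    have hG : Cj * Real.exp (A2 * (x j) ^ 2 + A1 * (x j) + A0) = mehlerG d κ t 1 x y := by
      simp only [mehlerG, ← ha, ← hb, ← hpref]
      rw [← Finset.mul_prod_erase Finset.univ _ (Finset.mem_univ j)]
      rw [show A2 * (x j) ^ 2 + A1 * (x j) + A0
          = -(κ / (4 * 1)) * ((x j + y j) ^ 2 * a + (x j - y j) ^ 2 * b) by
        rw [hA2, hA1, hA0]; ring]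
      rw [hCj]; ring
    rw [hG]
    rw [show (2 * A2 * (x j) + A1) ^ 2 + 2 * A2
        = (κ / 2 * ((x j + y j) * a + (x j - y j) * b)) ^ 2 - κ / 2 * (a + b) by
      rw [hA2, hA1]; ring]
  simp only [laplacian]
  rw [Finset.mul_sum]
  exact Finset.sum_congr rfl fun j _ => key j

private lemma mehlerG_one_eq_two (d : ℕ) (κ t : ℝ) (x y : Fin d → ℝ) :
    mehlerG d κ t 1 x y = mehlerG d κ t 2 x y *
      Real.exp (-∑ j, κ / 8 * ((x j + y j) ^ 2 * Real.tanh (κ * t / 2) +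
        (x j - y j) ^ 2 * (Real.cosh (κ * t / 2) / Real.sinh (κ * t / 2)))) := by
  simp only [mehlerG, ← Real.exp_sum]
  rw [mul_assoc ((κ / (2 * Real.pi * Real.sinh (κ * t))) ^ ((d : ℝ) / 2)), ← Real.exp_add]
  congr 2
  rw [← sub_eq_add_neg, ← Finset.sum_sub_distrib]
  exact Finset.sum_congr rfl fun j _ => by ring

/-- Laplacian estimate for the Mehler kernel. -/
theorem mehler_laplacian_bound (d : ℕ) (hd : d = 1 ∨ d = 2 ∨ d = 3) :
    ∃ C > 0, ∀ κ > (0 : ℝ), ∀ x y : Fin d → ℝ, ∀ t > (0 : ℝ),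
      |laplacian (fun x' => mehlerG d κ t 1 x' y) x| ≤
        C * κ * (Real.cosh (κ * t) / Real.sinh (κ * t)) * mehlerG d κ t 2 x y := by
  refine ⟨14, by norm_num, ?_⟩
  intro κ hκ x y t ht
  have hκt : 0 < κ * t := by positivity
  have hθ : 0 < κ * t / 2 := by positivity
  have hsθ : 0 < Real.sinh (κ * t / 2) := Real.sinh_pos_iff.mpr hθ
  have hcθ : (1 : ℝ) ≤ Real.cosh (κ * t / 2) := Real.one_le_cosh _
  have hsκt : 0 < Real.sinh (κ * t) := Real.sinh_pos_iff.mpr hκt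
  have hcκt : (1 : ℝ) ≤ Real.cosh (κ * t) := Real.one_le_cosh _
  rw [laplacian_mehler, mehlerG_one_eq_two]
  set a := Real.tanh (κ * t / 2) with ha
  set b := Real.cosh (κ * t / 2) / Real.sinh (κ * t / 2) with hb
  set cth := Real.cosh (κ * t) / Real.sinh (κ * t) with hcth
  have ha' : a = Real.sinh (κ * t / 2) / Real.cosh (κ * t / 2) :=
    Real.tanh_eq_sinh_div_cosh _
  have hapos : 0 < a := by rw [ha']; exact div_pos hsθ (by linarith)
  have hbpos : 0 < b := div_pos (by linarith) hsθ
  have hab : a ≤ b := by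
    rw [ha', hb, div_le_div_iff₀ (by linarith) hsθ]
    nlinarith [Real.cosh_sq (κ * t / 2)]
  have hcthpos : 0 < cth := div_pos (by linarith) hsκt
  have hb2 : b ≤ 2 * cth := by
    have h1 : Real.sinh (κ * t) = 2 * Real.sinh (κ * t / 2) * Real.cosh (κ * t / 2) := by
      have h := Real.sinh_two_mul (κ * t / 2)
      rw [show 2 * (κ * t / 2) = κ * t by ring] at h
      exact h
    have h2 : Real.cosh (κ * t) = 2 * Real.cosh (κ * t / 2) ^ 2 - 1 := by
      have h := Real.cosh_two_mul (κ * t / 2)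
      rw [show 2 * (κ * t / 2) = κ * t by ring] at h
      rw [h, Real.sinh_sq]
      ring
    rw [hb, hcth, h1, h2, ← mul_div_assoc,
      div_le_div_iff₀ hsθ (by positivity)]
    nlinarith [hsθ, hcθ]
  -- abbreviations
  set u := ∑ j, κ / 8 * ((x j + y j) ^ 2 * a + (x j - y j) ^ 2 * b) with hu
  set S := ∑ j, ((κ / 2 * ((x j + y j) * a + (x j - y j) * b)) ^ 2 - κ / 2 * (a + b)) with hS
  have hG2pos : 0 < mehlerG d κ t 2 x y := by
    rw [mehlerG]
    have hbase : 0 < κ / (2 * Real.pi * Real.sinh (κ * t)) :=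
      div_pos hκ (by positivity)
    exact mul_pos (Real.rpow_pos_of_pos hbase _)
      (Finset.prod_pos fun j _ => Real.exp_pos _)
  have hunn : 0 ≤ u := by
    rw [hu]
    refine Finset.sum_nonneg fun j _ => ?_
    have := sq_nonneg (x j + y j); have := sq_nonneg (x j - y j)
    positivity
  -- |S| bound
  have hcnn : 0 ≤ κ / 2 * (a + b) := by positivity
  have hSb : |S| ≤ 4 * κ * b * u + (d : ℝ) * (κ / 2 * (a + b)) := by
    calc |S| ≤ ∑ j, |(κ / 2 * ((x j + y j) * a + (x j - y j) * b)) ^ 2 - κ / 2 * (a + b)| :=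
          Finset.abs_sum_le_sum_abs _ _
      _ ≤ ∑ j, (4 * κ * b * (κ / 8 * ((x j + y j) ^ 2 * a + (x j - y j) ^ 2 * b))
            + κ / 2 * (a + b)) := by
          refine Finset.sum_le_sum fun j _ => ?_
          set p := x j + y j
          set m := x j - y j
          have habs : |(κ / 2 * (p * a + m * b)) ^ 2 - κ / 2 * (a + b)|
              ≤ (κ / 2 * (p * a + m * b)) ^ 2 + κ / 2 * (a + b) := by
            rw [abs_sub_le_iff]
            constructor <;> linarith [sq_nonneg (κ / 2 * (p * a + m * b)), hcnn]
          refine habs.trans ?_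
          have hcore : (p * a + m * b) ^ 2 ≤ 2 * b * (p ^ 2 * a + m ^ 2 * b) := by
            nlinarith [sq_nonneg (p * a - m * b),
              mul_nonneg (mul_nonneg (sq_nonneg p) hapos.le) (sub_nonneg.2 hab)]
          linarith [mul_le_mul_of_nonneg_left hcore (by positivity : (0:ℝ) ≤ κ ^ 2 / 4)]
      _ = 4 * κ * b * u + (d : ℝ) * (κ / 2 * (a + b)) := by
          rw [Finset.sum_add_distrib, ← Finset.mul_sum, Finset.sum_const,
            Finset.card_univ, Fintype.card_fin, nsmul_eq_mul, hu]
  -- numeric bound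
  have hue : u * Real.exp (-u) ≤ 1 := by
    rw [Real.exp_neg, ← div_eq_mul_inv, div_le_one (Real.exp_pos u)]
    linarith [Real.add_one_le_exp u]
  have hee : Real.exp (-u) ≤ 1 := by
    rw [show (1:ℝ) = Real.exp 0 by rw [Real.exp_zero]]
    exact Real.exp_le_exp.mpr (by linarith)
  have hd3 : (d : ℝ) ≤ 3 := by rcases hd with h | h | h <;> rw [h] <;> norm_num
  have hmain : Real.exp (-u) * |S| ≤ 14 * κ * cth := by
    have e0 : 0 ≤ Real.exp (-u) := (Real.exp_pos _).le
    have step1 : Real.exp (-u) * |S| ≤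
        Real.exp (-u) * (4 * κ * b * u + (d : ℝ) * (κ / 2 * (a + b))) :=
      mul_le_mul_of_nonneg_left hSb e0
    have e1 : 4 * κ * b * (u * Real.exp (-u)) ≤ 4 * κ * b * 1 :=
      mul_le_mul_of_nonneg_left hue (by positivity)
    have e2 : (d : ℝ) * (κ / 2 * (a + b)) * Real.exp (-u)
        ≤ (d : ℝ) * (κ / 2 * (a + b)) * 1 :=
      mul_le_mul_of_nonneg_left hee (by positivity)
    have e3 : (d : ℝ) * (κ / 2 * (a + b)) ≤ 3 * (κ * b) := by
      have h1 : (d : ℝ) * (κ / 2 * (a + b)) ≤ 3 * (κ / 2 * (a + b)) :=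
        mul_le_mul_of_nonneg_right hd3 (by positivity)
      linarith [h1, mul_le_mul_of_nonneg_left hab hκ.le]
    have e4 : 7 * (κ * b) ≤ 14 * κ * cth := by
      have := mul_le_mul_of_nonneg_left hb2 (show (0:ℝ) ≤ 7 * κ by positivity)
      linarith
    linarith [step1, e1, e2, e3, e4]
  calc |mehlerG d κ t 2 x y * Real.exp (-u) * S|
      = mehlerG d κ t 2 x y * (Real.exp (-u) * |S|) := by
        rw [abs_mul, abs_mul, abs_of_pos hG2pos, abs_of_pos (Real.exp_pos _), mul_assoc]
    _ ≤ mehlerG d κ t 2 x y * (14 * κ * cth) :=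
        mul_le_mul_of_nonneg_left hmain hG2pos.le
    _ = 14 * κ * cth * mehlerG d κ t 2 x y := by ring
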